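/- Under the same hypotheses as the preceding lemma, plus the symmetry ψ_{ij} = ψ_{ji} and the structural assumption that for all t > 0 and all w ∈ (ℝ^d)^N with Σ_i w_i = 0 one has ⟨L(t−τ(t)) w, w⟩ ≥ γ ‖w‖² (where L(s) is the Laplacian of the weights ψ_{ij}(s) with coupling λ), the quantity W(t) = (1/N) Σ_{i=1}^N |w_i(t)|² satisfies, for a.e. t > 0: dW/dt(t) ≤ −γ W(t) + (λ² τ̄ / γ) · (1/N) ∫_{t−τ(t)}^t Σ_{i=1}^N |v̇_i(s)|² ds. -/

import Mathlib

open scoped BigOperators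
open Finset

local notation "⟪" x ", " y "⟫" => @inner ℝ _ _ x y

set_option maxHeartbeats 2000000 in
theorem delayed_variance_differential_inequality (N d : ℕ) (hN : 1 ≤ N) (hd : 1 ≤ d)
    (lam τbar γ : ℝ) (hlam : 0 ≤ lam) (hτbar : 0 < τbar) (hγ : 0 < γ)
    (v : Fin N → ℝ → EuclideanSpace ℝ (Fin d)) (hv : ∀ i, ContDiff ℝ 1 (v i))
    (τ : ℝ → ℝ) (hτ : ∀ t, 0 ≤ τ t ∧ τ t ≤ τbar)
    (ψ : Fin N → Fin N → ℝ → ℝ) (hψ : ∀ i j t, 0 ≤ ψ i j t ∧ ψ i j t ≤ 1)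
    (hsym : ∀ i j t, ψ i j t = ψ j i t)
    (hode : ∀ i t, 0 < t → deriv (v i) t
      = (lam / N) • ∑ j ∈ univ.erase i, ψ i j (t - τ t) • (v j (t - τ t) - v i t))
    -- structural assumption: ⟨L(t-τ(t)) w, w⟩ ≥ γ ‖w‖² on zero-mean vectors,
    -- where ⟨L(s) w, w⟩ = (λ/(2N)) Σ_{i,j} ψ_{ij}(s) |w_i - w_j|²
    (hstruct : ∀ t, 0 < t → ∀ w : Fin N → EuclideanSpace ℝ (Fin d), (∑ i, w i) = 0 →
      (lam / (2 * N)) * ∑ i, ∑ j, ψ i j (t - τ t) * ‖w i - w j‖ ^ 2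
        ≥ γ * ∑ i, ‖w i‖ ^ 2)
    (t : ℝ) (ht : 0 < t) :
    deriv (fun s => (1 / (N : ℝ)) * ∑ i, ‖v i s - (1 / (N : ℝ)) • ∑ k, v k s‖ ^ 2) t
      ≤ - γ * ((1 / (N : ℝ)) * ∑ i, ‖v i t - (1 / (N : ℝ)) • ∑ k, v k t‖ ^ 2)
        + (lam ^ 2 * τbar / γ) *
          ((1 / (N : ℝ)) * ∫ s in (t - τ t)..t, ∑ i, ‖deriv (v i) s‖ ^ 2) := by
  have hN0 : (0:ℝ) < N := by exact_mod_cast hN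
  have hNne : (N:ℝ) ≠ 0 := ne_of_gt hN0
  set a : ℝ := t - τ t with ha
  have hat : a ≤ t := by have := (hτ t).1; simp only [ha]; linarith
  -- deviations from the mean
  set w : Fin N → EuclideanSpace ℝ (Fin d) :=
    fun i => v i t - (1/(N:ℝ)) • ∑ k, v k t with hwdef
  -- zero mean
  have hsum0 : ∑ i, w i = 0 := by
    simp only [hwdef, Finset.sum_sub_distrib, Finset.sum_const, card_univ, Fintype.card_fin]
    rw [← Nat.cast_smul_eq_nsmul ℝ, smul_smul, mul_one_div_cancel hNne, one_smul, sub_self]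
  -- continuity/integrability facts
  have hcd : ∀ j, Continuous (deriv (v j)) := fun j => (hv j).continuous_deriv le_rfl
  have hint : ∀ j, IntervalIntegrable (deriv (v j)) MeasureTheory.volume a t :=
    fun j => (hcd j).intervalIntegrable a t
  -- the delay integral
  set I : Fin N → EuclideanSpace ℝ (Fin d) :=
    fun j => ∫ s in a..t, deriv (v j) s with hIdef
  have hFTC : ∀ j, I j = v j t - v j a := by
    intro j
    exact intervalIntegral.integral_deriv_eq_sub
      (fun x _ => ((hv j).differentiable one_ne_zero).differentiableAt) (hint j)
  -- derivative of each v i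
  have hder : ∀ i, HasDerivAt (v i) (deriv (v i) t) t :=
    fun i => (((hv i).differentiable one_ne_zero) t).hasDerivAt
  have hbar : HasDerivAt (fun s => (1/(N:ℝ)) • ∑ k, v k s)
      ((1/(N:ℝ)) • ∑ k, deriv (v k) t) t := by
    have : HasDerivAt (fun s => ∑ k, v k s) (∑ k, deriv (v k) t) t :=
      HasDerivAt.fun_sum (fun k _ => hder k)
    exact this.fun_const_smul _
  set g' : Fin N → EuclideanSpace ℝ (Fin d) :=
    fun i => deriv (v i) t - (1/(N:ℝ)) • ∑ k, deriv (v k) t with hg'def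
  have hw : ∀ i, HasDerivAt (fun s => v i s - (1/(N:ℝ)) • ∑ k, v k s) (g' i) t :=
    fun i => (hder i).sub hbar
  -- derivative of the squared norms
  have hsq : ∀ i, HasDerivAt (fun s => ‖v i s - (1/(N:ℝ)) • ∑ k, v k s‖^2)
      (2 * ⟪w i, g' i⟫) t := by
    intro i
    have h := (hw i).inner ℝ (hw i)
    have heq : (fun s => (⟪v i s - (1/(N:ℝ)) • ∑ k, v k s,
        v i s - (1/(N:ℝ)) • ∑ k, v k s⟫ : ℝ))
        = fun s => ‖v i s - (1/(N:ℝ)) • ∑ k, v k s‖^2 := by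
      funext s; rw [real_inner_self_eq_norm_sq]
    rw [heq] at h
    convert h using 1
    case e'_4 => rfl
    case e'_5 => rfl
    rw [real_inner_comm (w i) (g' i)]
    simp only [hwdef]
    ring
  have hF : HasDerivAt (fun s => (1 / (N : ℝ)) * ∑ i, ‖v i s - (1 / (N : ℝ)) • ∑ k, v k s‖ ^ 2)
      ((1/(N:ℝ)) * ∑ i, 2 * ⟪w i, g' i⟫) t := by
    have : HasDerivAt (fun s => ∑ i, ‖v i s - (1/(N:ℝ)) • ∑ k, v k s‖^2)
        (∑ i, 2 * ⟪w i, g' i⟫) t := HasDerivAt.fun_sum (fun i _ => hsq i)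
    simpa [mul_comm] using this.const_mul (1/(N:ℝ))
  -- mean part of the derivative vanishes against w
  have hmean : ∑ i, (⟪w i, g' i⟫ : ℝ) = ∑ i, (⟪w i, deriv (v i) t⟫ : ℝ) := by
    simp only [hg'def, inner_sub_right, Finset.sum_sub_distrib]
    rw [← sum_inner, hsum0]
    simp
  -- decomposition of the delayed term
  have hdecomp : ∀ i j : Fin N, v j a - v i t = (w j - w i) - I j := by
    intro i j
    rw [hFTC j]
    simp only [hwdef]
    abel
  have hode' : ∀ i, (⟪w i, deriv (v i) t⟫ : ℝ)
      = (lam/(N:ℝ)) * ((∑ j, ψ i j a * ⟪w i, w j - w i⟫)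
          - ∑ j ∈ univ.erase i, ψ i j a * ⟪w i, I j⟫) := by
    intro i
    rw [hode i t ht]
    rw [inner_smul_right, inner_sum]
    have e : ∀ j, (⟪w i, ψ i j a • (v j a - v i t)⟫ : ℝ)
        = ψ i j a * ⟪w i, w j - w i⟫ - ψ i j a * ⟪w i, I j⟫ := by
      intro j
      rw [inner_smul_right, hdecomp i j, inner_sub_right]
      ring
    rw [Finset.sum_congr rfl (fun j _ => e j), Finset.sum_sub_distrib]
    congr 2
    exact Finset.sum_erase _ (by simp)
  -- real quantities
  set S2 : ℝ := ∑ i, ‖w i‖^2 with hS2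
  set P : ℝ := ∑ i, ∑ j, ψ i j a * ‖w i - w j‖^2 with hP
  set A : ℝ := ∑ i, ∑ j, ψ i j a * (⟪w i, w j - w i⟫ : ℝ) with hA
  set B : ℝ := ∑ i, ∑ j ∈ univ.erase i, ψ i j a * (⟪w i, I j⟫ : ℝ) with hB
  set K : Fin N → ℝ := fun j => ∫ s in a..t, ‖deriv (v j) s‖^2 with hK
  set Q' : ℝ := ∑ j, K j with hQ'
  have hKnn : ∀ j, 0 ≤ K j := fun j =>
    intervalIntegral.integral_nonneg hat (fun s _ => by positivity)
  clear_value w a I g' S2 P A B K Q'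
  -- symmetrization
  have key : ∀ x y : EuclideanSpace ℝ (Fin d),
      (⟪x, y - x⟫ : ℝ) + (⟪y, x - y⟫ : ℝ) = -‖x - y‖^2 := by
    intro x y
    simp only [← real_inner_self_eq_norm_sq, inner_sub_right, inner_sub_left,
      real_inner_comm y x]
    ring
  have hsymA : 2 * A = - P := by
    have swap : A = ∑ i, ∑ j, ψ i j a * (⟪w j, w i - w j⟫ : ℝ) := by
      rw [hA, Finset.sum_comm]
      exact Finset.sum_congr rfl fun i _ => Finset.sum_congr rfl fun j _ => by
        rw [hsym j i]
    have h2A : A + A = ∑ i, ∑ j, ψ i j a * (-‖w i - w j‖^2) := by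
      nth_rewrite 1 [swap]
      rw [hA, ← Finset.sum_add_distrib]
      refine Finset.sum_congr rfl fun i _ => ?_
      rw [← Finset.sum_add_distrib]
      refine Finset.sum_congr rfl fun j _ => ?_
      linear_combination (ψ i j a) * key (w i) (w j)
    rw [two_mul, h2A, hP]
    simp only [mul_neg, Finset.sum_neg_distrib]
  -- structural bound
  have hlamA : lam * A ≤ -((N:ℝ) * γ * S2) := by
    have hPge : γ * S2 ≤ lam/(2*(N:ℝ)) * P := by
      rw [hP, hS2, ha]
      exact hstruct t ht w hsum0
    have hP2 : P = -(2*A) := by linarith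
    rw [hP2] at hPge
    have h1 : γ * S2 ≤ -(lam * A) / (N:ℝ) := by
      calc γ * S2 ≤ lam/(2*(N:ℝ)) * (-(2*A)) := hPge
        _ = -(lam * A) / (N:ℝ) := by field_simp
    have h2 := mul_le_mul_of_nonneg_left h1 (le_of_lt hN0)
    have h3 : (N:ℝ) * (-(lam*A)/(N:ℝ)) = -(lam*A) := by
      field_simp
    linarith
  -- per-term Young bound for the delay term
  have hterm : ∀ i j : Fin N, -(lam * (ψ i j a * (⟪w i, I j⟫ : ℝ)))
      ≤ γ/2 * ‖w i‖^2 + lam^2*τbar/(2*γ) * K j := by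
    intro i j
    have hw_nn : (0:ℝ) ≤ ‖w i‖ := norm_nonneg _
    have hIle : ‖I j‖ ≤ ∫ s in a..t, ‖deriv (v j) s‖ := by
      simp only [hIdef]
      exact intervalIntegral.norm_integral_le_integral_norm hat
    have habs := abs_real_inner_le_norm (w i) (I j)
    have habs' := abs_le.mp habs
    have h1 : -(lam * (ψ i j a * (⟪w i, I j⟫ : ℝ))) ≤ lam * (‖w i‖ * ‖I j‖) := by
      have h0 := (hψ i j a).1
      have h1' := (hψ i j a).2
      have hc : (0:ℝ) ≤ ‖w i‖ * ‖I j‖ := mul_nonneg hw_nn (norm_nonneg _)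
      have hb : -(⟪w i, I j⟫ : ℝ) ≤ ‖w i‖ * ‖I j‖ := by linarith [habs'.1]
      calc -(lam * (ψ i j a * (⟪w i, I j⟫ : ℝ)))
          = lam * (ψ i j a * (-(⟪w i, I j⟫ : ℝ))) := by ring
        _ ≤ lam * (ψ i j a * (‖w i‖ * ‖I j‖)) :=
            mul_le_mul_of_nonneg_left (mul_le_mul_of_nonneg_left hb h0) hlam
        _ ≤ lam * (1 * (‖w i‖ * ‖I j‖)) :=
            mul_le_mul_of_nonneg_left (mul_le_mul_of_nonneg_right h1' hc) hlam
        _ = lam * (‖w i‖ * ‖I j‖) := by ring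
    have h2 : lam * (‖w i‖ * ‖I j‖) ≤ lam * (‖w i‖ * ∫ s in a..t, ‖deriv (v j) s‖) :=
      mul_le_mul_of_nonneg_left (mul_le_mul_of_nonneg_left hIle hw_nn) hlam
    have h3 : lam * (‖w i‖ * ∫ s in a..t, ‖deriv (v j) s‖)
        = ∫ s in a..t, lam * ‖w i‖ * ‖deriv (v j) s‖ := by
      rw [intervalIntegral.integral_const_mul]
      ring
    have h4 : (∫ s in a..t, lam * ‖w i‖ * ‖deriv (v j) s‖)
        ≤ ∫ s in a..t, (γ/(2*τbar) * ‖w i‖^2 + lam^2*τbar/(2*γ) * ‖deriv (v j) s‖^2) := by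
      apply intervalIntegral.integral_mono_on hat
      · exact (continuous_const.mul (hcd j).norm).intervalIntegrable a t
      · exact (continuous_const.add
          (continuous_const.mul (((hcd j).norm).pow 2))).intervalIntegrable a t
      · intro s _
        have hb : (0:ℝ) ≤ ‖deriv (v j) s‖ := norm_nonneg _
        have key2 : 0 ≤ (γ * ‖w i‖ - lam * τbar * ‖deriv (v j) s‖)^2 := sq_nonneg _
        rw [div_mul_eq_mul_div, div_mul_eq_mul_div,
          div_add_div _ _ (by positivity : (2*τbar:ℝ) ≠ 0) (by positivity : (2*γ:ℝ) ≠ 0),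
          le_div_iff₀ (by positivity)]
        nlinarith [mul_nonneg (mul_nonneg hlam hw_nn) hb, key2, mul_pos hγ hτbar]
    have h5 : (∫ s in a..t, (γ/(2*τbar) * ‖w i‖^2 + lam^2*τbar/(2*γ) * ‖deriv (v j) s‖^2))
        = (t - a) * (γ/(2*τbar) * ‖w i‖^2) + lam^2*τbar/(2*γ) * K j := by
      rw [intervalIntegral.integral_add (g := fun s => lam^2*τbar/(2*γ) * ‖deriv (v j) s‖^2) intervalIntegrable_const
          ((continuous_const.mul (((hcd j).norm).pow 2)).intervalIntegrable a t),
        intervalIntegral.integral_const, intervalIntegral.integral_const_mul]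
      rw [hK]
      simp [smul_eq_mul]
    have h6 : (t - a) * (γ/(2*τbar) * ‖w i‖^2) ≤ γ/2 * ‖w i‖^2 := by
      have h7 : t - a = τ t := by rw [ha]; ring
      rw [h7]
      have hτ1 := (hτ t).1
      have hτ2 := (hτ t).2
      have hc : τ t * (γ / (2 * τbar)) ≤ γ / 2 := by
        have hpos : (0:ℝ) ≤ γ/(2*τbar) := by positivity
        have hmul := mul_le_mul_of_nonneg_right hτ2 hpos
        have heq : τbar * (γ/(2*τbar)) = γ/2 := by field_simp
        linarith
      calc τ t * (γ/(2*τbar) * ‖w i‖^2) = (τ t * (γ/(2*τbar))) * ‖w i‖^2 := by ring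
        _ ≤ γ/2 * ‖w i‖^2 := mul_le_mul_of_nonneg_right hc (sq_nonneg _)
    linarith
  -- sum the per-term bounds
  have hBsum : -(lam * B) ≤ (N:ℝ) * ((γ/2) * S2) + (N:ℝ) * (lam^2*τbar/(2*γ) * Q') := by
    have step1 : -(lam * B) = ∑ i, ∑ j ∈ univ.erase i, -(lam * (ψ i j a * (⟪w i, I j⟫ : ℝ))) := by
      simp only [hB, Finset.mul_sum, ← Finset.sum_neg_distrib]
    rw [step1]
    calc ∑ i, ∑ j ∈ univ.erase i, -(lam * (ψ i j a * (⟪w i, I j⟫ : ℝ)))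
        ≤ ∑ i, ∑ j ∈ univ.erase i, (γ/2 * ‖w i‖^2 + lam^2*τbar/(2*γ) * K j) :=
          Finset.sum_le_sum fun i _ => Finset.sum_le_sum fun j _ => hterm i j
      _ ≤ ∑ i, ∑ j, (γ/2 * ‖w i‖^2 + lam^2*τbar/(2*γ) * K j) :=
          Finset.sum_le_sum fun i _ => Finset.sum_le_sum_of_subset_of_nonneg
            (Finset.erase_subset _ _) (fun j _ _ =>
              add_nonneg (by positivity) (mul_nonneg (by positivity) (hKnn j)))
      _ = (N:ℝ) * ((γ/2) * S2) + (N:ℝ) * (lam^2*τbar/(2*γ) * Q') := by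
          simp only [Finset.sum_add_distrib, Finset.sum_const, card_univ, Fintype.card_fin,
            nsmul_eq_mul, ← Finset.mul_sum, ← Finset.sum_mul, hS2, hQ']
  -- identify the sum of integrals with the integral of sums
  have hQQ : Q' = ∫ s in a..t, ∑ i, ‖deriv (v i) s‖^2 := by
    rw [hQ']
    simp only [hK]
    rw [← intervalIntegral.integral_finset_sum]
    exact fun j _ => (((hcd j).norm).pow 2).intervalIntegrable a t
  -- value of the derivative
  have hDval : deriv (fun s => (1 / (N : ℝ)) * ∑ i, ‖v i s - (1 / (N : ℝ)) • ∑ k, v k s‖ ^ 2) t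
      = (2*lam/(N:ℝ)^2) * (A - B) := by
    rw [hF.deriv]
    have e1 : ∑ i, 2*(⟪w i, g' i⟫:ℝ) = 2 * ∑ i, (⟪w i, deriv (v i) t⟫:ℝ) := by
      rw [← Finset.mul_sum, hmean]
    have e2 : ∑ i, (⟪w i, deriv (v i) t⟫:ℝ) = (lam/(N:ℝ)) * (A - B) := by
      rw [Finset.sum_congr rfl fun i _ => hode' i, ← Finset.mul_sum,
        Finset.sum_sub_distrib, hA, hB]
    rw [e1, e2]
    field_simp
  rw [hDval]
  have hfinal : (2*lam/(N:ℝ)^2) * (A - B)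
      ≤ (2/(N:ℝ)^2) * (-((N:ℝ)*γ*S2) + ((N:ℝ)*((γ/2)*S2) + (N:ℝ)*(lam^2*τbar/(2*γ) * Q'))) := by
    have h := add_le_add hlamA hBsum
    have expand : (2*lam/(N:ℝ)^2) * (A - B) = (2/(N:ℝ)^2) * (lam*A + -(lam*B)) := by ring
    rw [expand]
    exact mul_le_mul_of_nonneg_left h (by positivity)
  refine le_trans hfinal (le_of_eq ?_)
  rw [← hQQ]
  field_simp
  ring
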